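/- Let f be a unit of A whose image f̄ in A/πA is not a p-th power in the fraction field of A/πA. Then the ring A[y]/(y^p − f) is an integrally closed integral domain; consequently it is the integral closure of A in the field Frac(A)[y]/(y^p − f). (This is the multiplicative-reduction case of the reduction of μ_p-torsors: the torsor extends to a μ_p-torsor over Spec A.) -/

import Mathlib

open Polynomial

section AuxMap
variable {A : Type*} [CommRing A] [IsDomain A] (F : Type*) [Field F] [Algebra A F]
  [IsFractionRing A F]

noncomputable def adjMap (g : A[X]) :
    AdjoinRoot g →+* AdjoinRoot (g.map (algebraMap A F)) :=
  AdjoinRoot.lift ((AdjoinRoot.of _).comp (algebraMap A F)) (AdjoinRoot.root _)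
    (by rw [← Polynomial.eval₂_map]; exact AdjoinRoot.eval₂_root _)

theorem adjMap_mk (g P : A[X]) :
    adjMap F g (AdjoinRoot.mk g P) = AdjoinRoot.mk _ (P.map (algebraMap A F)) := by
  rw [adjMap, AdjoinRoot.lift_mk, ← Polynomial.eval₂_map, ← AdjoinRoot.algebraMap_eq,
    ← aeval_def, AdjoinRoot.aeval_eq]

theorem adjMap_of (g : A[X]) (a : A) :
    adjMap F g (AdjoinRoot.of g a) = AdjoinRoot.of _ (algebraMap A F a) := by
  rw [adjMap, AdjoinRoot.lift_of]; rfl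

theorem adjMap_injective (g : A[X]) (hg : g.Monic) : Function.Injective (adjMap F g) := by
  rw [injective_iff_map_eq_zero]
  intro b hb
  obtain ⟨P, rfl⟩ := AdjoinRoot.mk_surjective b
  have hmk : AdjoinRoot.mk g P = AdjoinRoot.mk g (P %ₘ g) :=
    AdjoinRoot.mk_eq_mk.mpr ⟨P /ₘ g, by linear_combination -modByMonic_add_div P g⟩
  rw [hmk, adjMap_mk, AdjoinRoot.mk_eq_zero] at hb
  have h0 : (P %ₘ g).map (algebraMap A F) = 0 := by
    refine Polynomial.eq_zero_of_dvd_of_degree_lt hb ?_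
    calc ((P %ₘ g).map (algebraMap A F)).degree ≤ (P %ₘ g).degree := degree_map_le
      _ < g.degree := degree_modByMonic_lt P hg
      _ = (g.map (algebraMap A F)).degree := (hg.degree_map _).symm
  rw [Polynomial.map_eq_zero_iff (IsFractionRing.injective A F)] at h0
  rw [hmk, h0, map_zero]

end AuxMap

section Descend

theorem descend_pow_smul {B L : Type*} [CommRing B] [IsDomain B] [Field L]
    (φ : B →+* L) (hφ : Function.Injective φ) {π : B} (hπ : Prime π)
    {x : L} (hx : ∃ P : B[X], P.Monic ∧ Polynomial.eval₂ φ x P = 0) :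
    ∀ N : ℕ, ∀ b : B, φ π ^ N * x = φ b → ∃ c, φ c = x := by
  intro N
  induction N with
  | zero => exact fun b hb => ⟨b, by simpa using hb.symm⟩
  | succ N ih =>
    intro b hb
    obtain ⟨P, hP, hPx⟩ := hx
    set m := P.natDegree with hm
    have hm1 : 1 ≤ m := by
      rcases Nat.eq_zero_or_pos m with h0 | h
      · exfalso
        have hP1 : P = 1 := hP.natDegree_eq_zero.mp h0
        rw [hP1] at hPx
        simp at hPx
      · exact h
    set s := π ^ (N + 1) with hs
    have key : Polynomial.eval₂ φ (φ b) (P.scaleRoots s) = 0 := by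
      have hb' : φ b = φ s * x := by rw [← hb, hs, map_pow]
      rw [hb', Polynomial.scaleRoots_eval₂_mul, hPx, mul_zero]
    have keyB : Polynomial.eval b (P.scaleRoots s) = 0 := by
      apply hφ; rw [← Polynomial.eval₂_at_apply, key, map_zero]
    have hcm : (P.scaleRoots s).coeff m = 1 := by
      rw [Polynomial.coeff_scaleRoots, ← hm, Nat.sub_self, pow_zero, mul_one, hm,
        hP.coeff_natDegree]
    have hdvd : π ∣ b ^ m := by
      have hev : Polynomial.eval b (P.scaleRoots s) =
          (P.scaleRoots s).coeff m * b ^ m +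
            ∑ i ∈ Finset.range m, (P.scaleRoots s).coeff i * b ^ i := by
        rw [Polynomial.eval_eq_sum_range' (lt_of_le_of_lt (Polynomial.natDegree_scaleRoots P s).le
          (Nat.lt_succ_self m)), Finset.sum_range_succ]; ring
      have h2 : b ^ m = -∑ i ∈ Finset.range m, (P.scaleRoots s).coeff i * b ^ i := by
        have h3 := hev
        rw [keyB, hcm, one_mul] at h3
        linear_combination -h3
      rw [h2, dvd_neg]
      refine Finset.dvd_sum fun i hi => ?_
      rw [Polynomial.coeff_scaleRoots]
      have hi' : i < m := Finset.mem_range.mp hi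
      refine Dvd.dvd.mul_right (Dvd.dvd.mul_left ?_ _) _
      calc π ∣ s := dvd_pow_self π (Nat.succ_ne_zero N)
        _ ∣ s ^ (P.natDegree - i) := dvd_pow_self s (by omega)
    obtain ⟨b', rfl⟩ := hπ.dvd_of_dvd_pow hdvd
    have hπ0 : φ π ≠ 0 := fun h => hπ.ne_zero (hφ (by simpa using h))
    refine ih b' (mul_left_cancel₀ hπ0 ?_)
    rw [map_mul] at hb
    rw [← hb, pow_succ]; ring

end Descend

set_option maxHeartbeats 2000000 in
set_option synthInstance.maxHeartbeats 200000 in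
theorem stmt_9 {p : ℕ} (hp : p.Prime)
    (R : Type*) [CommRing R] [IsDomain R] [IsDiscreteValuationRing R]
    [IsAdicComplete (IsLocalRing.maximalIdeal R) R]
    [CharZero (FractionRing R)]
    [IsAlgClosed (IsLocalRing.ResidueField R)] [CharP (IsLocalRing.ResidueField R) p]
    (π : R) (hπ : Irreducible π)
    (A : Type*) [CommRing A] [IsDomain A] [UniqueFactorizationMonoid A]
    [Algebra R A] [Module.Flat R A]
    [IsAdicComplete (Ideal.span {algebraMap R A π}) A]
    [IsDomain (A ⧸ Ideal.span {algebraMap R A π})]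
    (f : A) (hf : IsUnit f)
    (hfbar : ¬ ∃ g : FractionRing (A ⧸ Ideal.span {algebraMap R A π}),
      g ^ p = algebraMap (A ⧸ Ideal.span {algebraMap R A π}) _
        (Ideal.Quotient.mk (Ideal.span {algebraMap R A π}) f)) :
    IsDomain (AdjoinRoot ((Polynomial.X : Polynomial A) ^ p - Polynomial.C f)) ∧
    IsIntegrallyClosed (AdjoinRoot ((Polynomial.X : Polynomial A) ^ p - Polynomial.C f)) ∧
    IsIntegralClosure (AdjoinRoot ((Polynomial.X : Polynomial A) ^ p - Polynomial.C f)) A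
      (FractionRing (AdjoinRoot ((Polynomial.X : Polynomial A) ^ p - Polynomial.C f))) := by
  classical
  have hp0 : p ≠ 0 := hp.ne_zero
  have hmonic : ((X : A[X]) ^ p - C f).Monic := monic_X_pow_sub_C f hp0
  -- `R → A` is injective
  have hRA : Function.Injective (algebraMap R A) := by
    rw [injective_iff_map_eq_zero]
    intro r hr
    by_contra hr0
    have hreg : IsSMulRegular R r :=
      fun a b h => mul_left_cancel₀ hr0 (by simpa [smul_eq_mul] using h)
    have hregA : IsSMulRegular A r :=
      ((TensorProduct.lid R A).isSMulRegular_congr r).mp (hreg.rTensor A)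
    have h1 : r • (1 : A) = r • (0 : A) := by
      rw [smul_zero, ← Algebra.algebraMap_eq_smul_one, hr]
    exact one_ne_zero (hregA h1)
  -- characteristic zero facts
  haveI hCZR : CharZero R := ⟨fun m n h => by
    have h2 := congrArg (algebraMap R (FractionRing R)) h
    rw [map_natCast, map_natCast] at h2
    exact Nat.cast_injective h2⟩
  haveI hCZA : CharZero A := ⟨fun m n h => by
    have h2 : algebraMap R A (m : R) = algebraMap R A (n : R) := by
      rw [map_natCast, map_natCast]; exact_mod_cast h
    exact Nat.cast_injective (R := R) (hRA h2)⟩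
  haveI hCZK : CharZero (FractionRing A) := ⟨fun m n h => by
    have h2 : algebraMap A (FractionRing A) (m : A) = algebraMap A (FractionRing A) (n : A) := by
      rw [map_natCast, map_natCast]; exact_mod_cast h
    exact Nat.cast_injective (R := A) (IsFractionRing.injective A _ h2)⟩
  -- no p-th root of f in K := Frac A
  have hnoroot : ∀ b : FractionRing A, b ^ p ≠ algebraMap A (FractionRing A) f := by
    intro b hb
    have hbint : IsIntegral A b := ⟨X ^ p - C f, hmonic, by
      rw [eval₂_sub, eval₂_pow, eval₂_X, eval₂_C, hb, sub_self]⟩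
    obtain ⟨a, ha⟩ := IsIntegrallyClosed.isIntegral_iff.mp hbint
    have hap : a ^ p = f := IsFractionRing.injective A (FractionRing A) (by
      rw [map_pow, ha, hb])
    refine hfbar ⟨algebraMap (A ⧸ Ideal.span {algebraMap R A π})
      (FractionRing (A ⧸ Ideal.span {algebraMap R A π}))
      (Ideal.Quotient.mk (Ideal.span {algebraMap R A π}) a), ?_⟩
    rw [← map_pow, ← map_pow, hap]
  have hgKeq : ((X : A[X]) ^ p - C f).map (algebraMap A (FractionRing A)) =
      X ^ p - C (algebraMap A (FractionRing A) f) := by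
    rw [Polynomial.map_sub, Polynomial.map_pow, map_X, map_C]
  have hirr : Irreducible (((X : A[X]) ^ p - C f).map (algebraMap A (FractionRing A))) := by
    rw [hgKeq]; exact X_pow_sub_C_irreducible_of_prime hp hnoroot
  haveI : Fact (Irreducible (((X : A[X]) ^ p - C f).map (algebraMap A (FractionRing A)))) := ⟨hirr⟩
  have hφinj : Function.Injective (adjMap (FractionRing A) ((X : A[X]) ^ p - C f)) :=
    adjMap_injective _ _ hmonic
  haveI hdomB : IsDomain (AdjoinRoot ((X : A[X]) ^ p - C f)) :=
    Function.Injective.isDomain _ hφinj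
  -- A → B injective
  have hABinj : Function.Injective (algebraMap A (AdjoinRoot ((X : A[X]) ^ p - C f))) := by
    rw [AdjoinRoot.algebraMap_eq]
    intro a b h
    have h2 := congrArg (adjMap (FractionRing A) ((X : A[X]) ^ p - C f)) h
    rw [adjMap_of, adjMap_of] at h2
    exact IsFractionRing.injective A (FractionRing A) ((AdjoinRoot.of _).injective h2)
  have hπA0 : algebraMap R A π ≠ 0 := fun h => hπ.ne_zero (hRA (by rw [h, map_zero]))
  -- the reduction mod π
  have hgq : ((X : A[X]) ^ p - C f).map (Ideal.Quotient.mk (Ideal.span {algebraMap R A π})) =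
      X ^ p - C (Ideal.Quotient.mk (Ideal.span {algebraMap R A π}) f) := by
    rw [Polynomial.map_sub, Polynomial.map_pow, map_X, map_C]
  have hnoroot2 : ∀ b : FractionRing (A ⧸ Ideal.span {algebraMap R A π}),
      b ^ p ≠ algebraMap _ _ (Ideal.Quotient.mk (Ideal.span {algebraMap R A π}) f) :=
    fun b hb => hfbar ⟨b, hb⟩
  have hirr2 : Irreducible ((((X : A[X]) ^ p - C f).map
      (Ideal.Quotient.mk (Ideal.span {algebraMap R A π}))).map
      (algebraMap _ (FractionRing (A ⧸ Ideal.span {algebraMap R A π})))) := by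
    rw [hgq, Polynomial.map_sub, Polynomial.map_pow, map_X, map_C]
    exact X_pow_sub_C_irreducible_of_prime hp hnoroot2
  haveI : Fact (Irreducible ((((X : A[X]) ^ p - C f).map
      (Ideal.Quotient.mk (Ideal.span {algebraMap R A π}))).map
      (algebraMap _ (FractionRing (A ⧸ Ideal.span {algebraMap R A π}))))) := ⟨hirr2⟩
  haveI hdomq : IsDomain (AdjoinRoot (((X : A[X]) ^ p - C f).map
      (Ideal.Quotient.mk (Ideal.span {algebraMap R A π})))) :=
    Function.Injective.isDomain _
      (adjMap_injective (FractionRing (A ⧸ Ideal.span {algebraMap R A π})) _ (hmonic.map _))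
  haveI hdq1 : IsDomain ((A ⧸ Ideal.span {algebraMap R A π})[X] ⧸
      Ideal.span {((X : A[X]) ^ p - C f).map (Ideal.Quotient.mk (Ideal.span {algebraMap R A π}))}) :=
    hdomq
  have e := AdjoinRoot.quotAdjoinRootEquivQuotPolynomialQuot
    (Ideal.span {algebraMap R A π}) ((X : A[X]) ^ p - C f)
  haveI hdq2 : IsDomain (AdjoinRoot ((X : A[X]) ^ p - C f) ⧸
      (Ideal.span {algebraMap R A π}).map (AdjoinRoot.of ((X : A[X]) ^ p - C f))) :=
    Function.Injective.isDomain e.toRingHom e.injective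
  have hspan : Ideal.span {algebraMap A (AdjoinRoot ((X : A[X]) ^ p - C f)) (algebraMap R A π)} =
      (Ideal.span {algebraMap R A π}).map (AdjoinRoot.of ((X : A[X]) ^ p - C f)) := by
    rw [Ideal.map_span, Set.image_singleton, AdjoinRoot.algebraMap_eq]
  have hπB0 : algebraMap A (AdjoinRoot ((X : A[X]) ^ p - C f)) (algebraMap R A π) ≠ 0 :=
    fun h => hπA0 (hABinj (by rw [h, map_zero]))
  have hprime : Prime (algebraMap A (AdjoinRoot ((X : A[X]) ^ p - C f)) (algebraMap R A π)) := by
    rw [← Ideal.span_singleton_prime hπB0, hspan]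
    rw [← Ideal.Quotient.isDomain_iff_prime]
    exact hdq2
  -- L is the fraction field of B via φ
  letI : Algebra (AdjoinRoot ((X : A[X]) ^ p - C f)) (AdjoinRoot (((X : A[X]) ^ p - C f).map (algebraMap A (FractionRing A)))) := (adjMap (FractionRing A) ((X : A[X]) ^ p - C f)).toAlgebra
  have halgBL : algebraMap (AdjoinRoot ((X : A[X]) ^ p - C f)) (AdjoinRoot (((X : A[X]) ^ p - C f).map (algebraMap A (FractionRing A)))) = (adjMap (FractionRing A) ((X : A[X]) ^ p - C f)) := rfl
  haveI hFRBL : IsFractionRing (AdjoinRoot ((X : A[X]) ^ p - C f)) (AdjoinRoot (((X : A[X]) ^ p - C f).map (algebraMap A (FractionRing A)))) := by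
    refine ⟨fun y => ?_, fun z => ?_, fun {x y} h => ⟨1, by
      rw [halgBL] at h; rw [hφinj h]⟩⟩
    · rw [halgBL]
      refine isUnit_iff_ne_zero.mpr (fun h => ?_)
      have : (y : (AdjoinRoot ((X : A[X]) ^ p - C f))) = 0 := hφinj (by rw [h, map_zero])
      exact nonZeroDivisors.ne_zero y.2 this
    · obtain ⟨Q, rfl⟩ := AdjoinRoot.mk_surjective z
      obtain ⟨b, hb⟩ := IsLocalization.integerNormalization_map_to_map (nonZeroDivisors A) Q
      refine ⟨⟨AdjoinRoot.mk _ (IsLocalization.integerNormalization (nonZeroDivisors A) Q),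
        ⟨algebraMap A (AdjoinRoot ((X : A[X]) ^ p - C f)) b, mem_nonZeroDivisors_of_ne_zero (fun h =>
          nonZeroDivisors.ne_zero b.2 (hABinj (by rw [h, map_zero])))⟩⟩, ?_⟩
      rw [halgBL]
      show AdjoinRoot.mk _ Q * (adjMap (FractionRing A) ((X : A[X]) ^ p - C f)) (algebraMap A (AdjoinRoot ((X : A[X]) ^ p - C f)) (b : A)) =
        (adjMap (FractionRing A) ((X : A[X]) ^ p - C f)) (AdjoinRoot.mk _ (IsLocalization.integerNormalization (nonZeroDivisors A) Q))
      rw [AdjoinRoot.algebraMap_eq, adjMap_of, adjMap_mk, hb, Algebra.smul_def,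
        Polynomial.algebraMap_apply, map_mul, AdjoinRoot.mk_C, mul_comm]
  -- scalar tower A B L
  have hcomp : algebraMap A (AdjoinRoot (((X : A[X]) ^ p - C f).map (algebraMap A (FractionRing A)))) = (adjMap (FractionRing A) ((X : A[X]) ^ p - C f)).comp (algebraMap A (AdjoinRoot ((X : A[X]) ^ p - C f))) := by
    rw [IsScalarTower.algebraMap_eq A (FractionRing A) (AdjoinRoot (((X : A[X]) ^ p - C f).map (algebraMap A (FractionRing A))))]
    ext a
    rw [RingHom.comp_apply, RingHom.comp_apply, AdjoinRoot.algebraMap_eq,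
      AdjoinRoot.algebraMap_eq, adjMap_of]
  have hφalg : ∀ a : A, (adjMap (FractionRing A) ((X : A[X]) ^ p - C f)) (algebraMap A (AdjoinRoot ((X : A[X]) ^ p - C f)) a) = algebraMap A (AdjoinRoot (((X : A[X]) ^ p - C f).map (algebraMap A (FractionRing A)))) a := fun a => by
    rw [hcomp, RingHom.comp_apply]
  letI : IsScalarTower A (AdjoinRoot ((X : A[X]) ^ p - C f)) (AdjoinRoot (((X : A[X]) ^ p - C f).map (algebraMap A (FractionRing A)))) := IsScalarTower.of_algebraMap_eq' (by rw [hcomp, halgBL])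
  haveI : Module.Finite A (AdjoinRoot ((X : A[X]) ^ p - C f)) := Module.Finite.of_basis (AdjoinRoot.powerBasis' hmonic).basis
  haveI : Algebra.IsIntegral A (AdjoinRoot ((X : A[X]) ^ p - C f)) := Algebra.IsIntegral.of_finite A (AdjoinRoot ((X : A[X]) ^ p - C f))
  have hgKne : ((X : A[X]) ^ p - C f).map (algebraMap A (FractionRing A)) ≠ 0 :=
    (hmonic.map _).ne_zero
  haveI : Module.Finite (FractionRing A) (AdjoinRoot (((X : A[X]) ^ p - C f).map (algebraMap A (FractionRing A)))) :=
    Module.Finite.of_basis (AdjoinRoot.powerBasis hgKne).basis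
  haveI : Algebra.IsIntegral (FractionRing A) (AdjoinRoot (((X : A[X]) ^ p - C f).map (algebraMap A (FractionRing A)))) := Algebra.IsIntegral.of_finite _ _
  have haev : aeval (AdjoinRoot.root (((X : A[X]) ^ p - C f).map (algebraMap A (FractionRing A))))
      ((X : A[X]) ^ p - C f) = 0 := by
    rw [aeval_def, IsScalarTower.algebraMap_eq A (FractionRing A) (AdjoinRoot (((X : A[X]) ^ p - C f).map (algebraMap A (FractionRing A)))), ← Polynomial.eval₂_map,
      AdjoinRoot.algebraMap_eq]
    exact AdjoinRoot.eval₂_root _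
  have hgenint : IsIntegral A (AdjoinRoot.powerBasis hgKne).gen := by
    rw [AdjoinRoot.powerBasis_gen]
    exact ⟨(X : A[X]) ^ p - C f, hmonic, by rw [← aeval_def]; exact haev⟩
  have hmin : minpoly (FractionRing A) (AdjoinRoot.powerBasis hgKne).gen =
      ((X : A[X]) ^ p - C f).map (algebraMap A (FractionRing A)) := by
    rw [AdjoinRoot.powerBasis_gen, AdjoinRoot.minpoly_root hgKne, (hmonic.map _).leadingCoeff,
      inv_one, map_one, mul_one]
  have hdim : (AdjoinRoot.powerBasis hgKne).dim = p := by
    rw [AdjoinRoot.powerBasis_dim, hgKeq, natDegree_X_pow_sub_C]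
  have hfinrank : Module.finrank (FractionRing A) (AdjoinRoot (((X : A[X]) ^ p - C f).map (algebraMap A (FractionRing A)))) = p := by
    rw [(AdjoinRoot.powerBasis hgKne).finrank, hdim]
  -- the discriminant
  have hcoeff : (((X : A[X]) ^ p - C f).map (algebraMap A (FractionRing A))).coeff 0 =
      -(algebraMap A (FractionRing A) f) := by
    rw [hgKeq, coeff_sub, coeff_X_pow, if_neg (Ne.symm hp0), coeff_C_zero, zero_sub]
  have hder : derivative (((X : A[X]) ^ p - C f).map (algebraMap A (FractionRing A))) =
      C ((p : ℕ) : FractionRing A) * X ^ (p - 1) := by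
    rw [hgKeq, derivative_sub, derivative_C, sub_zero, derivative_X_pow]
  have hnormgen : Algebra.norm (FractionRing A) (AdjoinRoot.powerBasis hgKne).gen =
      (-1 : FractionRing A) ^ p * (-(algebraMap A (FractionRing A) f)) := by
    rw [Algebra.PowerBasis.norm_gen_eq_coeff_zero_minpoly, hmin, hdim, hcoeff]
  have hdiscval : Algebra.discr (FractionRing A) (AdjoinRoot.powerBasis hgKne).basis =
      algebraMap A (FractionRing A)
        ((-1 : A) ^ (p * (p - 1) / 2) * ((p : A) ^ p * ((-1 : A) ^ p * (-f)) ^ (p - 1))) := by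
    rw [Algebra.discr_powerBasis_eq_norm, hfinrank, hmin, hder, map_mul, aeval_C, map_pow,
      aeval_X, map_mul, map_pow, Algebra.norm_algebraMap, hfinrank, hnormgen]
    push_cast
    ring
  -- adjoin A {gen} is in the image of φ
  have hΦφ : ∀ z, AdjoinRoot.liftAlgHom ((X : A[X]) ^ p - C f) (Algebra.ofId A _) _ haev z = (adjMap (FractionRing A) ((X : A[X]) ^ p - C f)) z := by
    intro z
    obtain ⟨P, rfl⟩ := AdjoinRoot.mk_surjective z
    rw [adjMap_mk]
    change eval₂ (algebraMap A _) _ P = _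
    rw [
      IsScalarTower.algebraMap_eq A (FractionRing A) (AdjoinRoot (((X : A[X]) ^ p - C f).map (algebraMap A (FractionRing A)))), ← Polynomial.eval₂_map,
      ← aeval_def, AdjoinRoot.aeval_eq]
  have hadj : ∀ z ∈ Algebra.adjoin A {(AdjoinRoot.powerBasis hgKne).gen},
      ∃ b0, (adjMap (FractionRing A) ((X : A[X]) ^ p - C f)) b0 = z := by
    intro z hz
    rw [AdjoinRoot.powerBasis_gen] at hz
    have hle : Algebra.adjoin A
        {AdjoinRoot.root (((X : A[X]) ^ p - C f).map (algebraMap A (FractionRing A)))} ≤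
        (AdjoinRoot.liftAlgHom ((X : A[X]) ^ p - C f) (Algebra.ofId A _) _ haev).range := by
      rw [Algebra.adjoin_le_iff]
      rintro w rfl
      exact ⟨AdjoinRoot.root _, AdjoinRoot.liftAlgHom_root _ _ _ _⟩
    obtain ⟨b0, hb0⟩ := hle hz
    exact ⟨b0, by rw [← hΦφ]; exact hb0⟩
  -- p as unit times power of π
  have hpR : ((p : ℕ) : R) ≠ 0 := Nat.cast_ne_zero.mpr hp0
  obtain ⟨n, u, hpu⟩ := IsDiscreteValuationRing.eq_unit_mul_pow_irreducible hpR hπ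
  have hw : IsUnit ((-1 : A) ^ (p * (p - 1) / 2) * ((-1 : A) ^ p * (-f)) ^ (p - 1) *
      (algebraMap R A u) ^ p) := by
    refine IsUnit.mul (IsUnit.mul ?_ ?_) ?_
    · exact (isUnit_one.neg).pow _
    · exact (((isUnit_one.neg).pow p).mul hf.neg).pow _
    · exact ((u.isUnit.map (algebraMap R A)).pow p)
  obtain ⟨w', hw'⟩ := hw.exists_right_inv
  have hdAw : (-1 : A) ^ (p * (p - 1) / 2) * ((p : A) ^ p * ((-1 : A) ^ p * (-f)) ^ (p - 1)) =
      ((-1 : A) ^ (p * (p - 1) / 2) * ((-1 : A) ^ p * (-f)) ^ (p - 1) *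
        (algebraMap R A u) ^ p) * (algebraMap R A π) ^ (n * p) := by
    have hpA : (p : A) = algebraMap R A u * (algebraMap R A π) ^ n := by
      have h5 := congrArg (algebraMap R A) hpu
      rwa [map_natCast, map_mul, map_pow] at h5
    rw [hpA]
    ring
  -- the integrally closed property
  haveI hICB : IsIntegrallyClosed (AdjoinRoot ((X : A[X]) ^ p - C f)) := by
    rw [isIntegrallyClosed_iff (AdjoinRoot (((X : A[X]) ^ p - C f).map (algebraMap A (FractionRing A))))]
    intro x hx
    have hxA : IsIntegral A x := isIntegral_trans x hx
    have hmem := Algebra.discr_mul_isIntegral_mem_adjoin (R := A) (K := FractionRing A)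
      (L := (AdjoinRoot (((X : A[X]) ^ p - C f).map (algebraMap A (FractionRing A))))) hgenint hxA
    rw [Algebra.smul_def, hdiscval, ← IsScalarTower.algebraMap_apply A (FractionRing A) (AdjoinRoot (((X : A[X]) ^ p - C f).map (algebraMap A (FractionRing A))))]
      at hmem
    obtain ⟨b0, hb0⟩ := hadj _ hmem
    have hwd : w' * ((-1 : A) ^ (p * (p - 1) / 2) *
        ((p : A) ^ p * ((-1 : A) ^ p * (-f)) ^ (p - 1))) = (algebraMap R A π) ^ (n * p) := by
      rw [hdAw, ← mul_assoc, mul_comm w', hw', one_mul]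
    have hkey : (adjMap (FractionRing A) ((X : A[X]) ^ p - C f)) (algebraMap A (AdjoinRoot ((X : A[X]) ^ p - C f)) (algebraMap R A π)) ^ (n * p) * x =
        (adjMap (FractionRing A) ((X : A[X]) ^ p - C f)) (algebraMap A (AdjoinRoot ((X : A[X]) ^ p - C f)) w' * b0) := by
      rw [map_mul, hb0, hφalg, hφalg, ← mul_assoc, ← map_mul, hwd, map_pow]
    obtain ⟨P, hPm, hPe⟩ := hx
    obtain ⟨c, hc⟩ := descend_pow_smul (adjMap (FractionRing A) ((X : A[X]) ^ p - C f)) hφinj hprime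
      ⟨P, hPm, by rwa [halgBL] at hPe⟩ (n * p) _ hkey
    exact ⟨c, by rw [halgBL, hc]⟩
  refine ⟨hdomB, hICB, ?_⟩
  refine ⟨IsFractionRing.injective (AdjoinRoot ((X : A[X]) ^ p - C f)) _, fun {x} => ⟨fun hx => ?_, fun hx => ?_⟩⟩
  · exact IsIntegrallyClosed.isIntegral_iff.mp hx.tower_top
  · obtain ⟨y, hy⟩ := hx
    rw [← hy]
    exact (Algebra.IsIntegral.isIntegral (R := A) y).algebraMap
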